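/- arXiv:2309.00128 — 2 statements merged into one kernel-verified Lean document; each statement's English description precedes it below -/
import Mathlib

section
/- Let n ≥ 1 be an integer and 0 < ε < π/2. The function G(ψ) = cot(ψ/2)ⁿ + tan(ψ/2)ⁿ satisfies −G'(ε) = σₙ⁻(ε)·G(ε) and G'(π − ε) = σₙ⁻(ε)·G(π − ε), where σₙ⁻(ε) = n·(1 − tan(ε/2)^{2n})/(sin(ε)·(1 + tan(ε/2)^{2n})) and G' denotes the derivative of G. -/
open Real Set

private lemma myHasDerivAt_cot {x : ℝ} (hx : Real.sin x ≠ 0) :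
    HasDerivAt Real.cot (-(1 / Real.sin x ^ 2)) x := by
  have hfun : Real.cot = fun y => Real.cos y / Real.sin y :=
    funext fun y => Real.cot_eq_cos_div_sin y
  have h := (Real.hasDerivAt_cos x).div (Real.hasDerivAt_sin x) hx
  rw [hfun]
  refine h.congr_deriv ?_
  have h2 := Real.sin_sq_add_cos_sq x
  field_simp [hx]
  nlinarith [h2]

private lemma derivG (n : ℕ) (hn : 1 ≤ n) (ψ : ℝ) (h1 : 0 < ψ) (h2 : ψ < π) :
    deriv (fun ψ : ℝ => Real.cot (ψ / 2) ^ n + Real.tan (ψ / 2) ^ n) ψ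
      = n * (Real.tan (ψ / 2) ^ n - Real.cot (ψ / 2) ^ n) / Real.sin ψ := by
  have hs : 0 < Real.sin (ψ / 2) := Real.sin_pos_of_pos_of_lt_pi (by linarith) (by linarith [Real.pi_pos])
  have hco : 0 < Real.cos (ψ / 2) := Real.cos_pos_of_mem_Ioo ⟨by linarith [Real.pi_pos], by linarith⟩
  have hhalf : HasDerivAt (fun y : ℝ => y / 2) (1 / 2 : ℝ) ψ := by
    simpa using (hasDerivAt_id ψ).div_const 2
  have hcot : HasDerivAt (fun y : ℝ => Real.cot (y / 2))
      (-(1 / Real.sin (ψ / 2) ^ 2) * (1 / 2)) ψ :=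
    (myHasDerivAt_cot hs.ne').comp (h₂ := Real.cot) (h := fun y : ℝ => y / 2) ψ hhalf
  have htan : HasDerivAt (fun y : ℝ => Real.tan (y / 2))
      (1 / Real.cos (ψ / 2) ^ 2 * (1 / 2)) ψ :=
    (Real.hasDerivAt_tan hco.ne').comp (h₂ := Real.tan) (h := fun y : ℝ => y / 2) ψ hhalf
  have hG : HasDerivAt (fun ψ : ℝ => Real.cot (ψ / 2) ^ n + Real.tan (ψ / 2) ^ n)
      ((n : ℝ) * Real.cot (ψ / 2) ^ (n - 1) * (-(1 / Real.sin (ψ / 2) ^ 2) * (1 / 2))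
        + (n : ℝ) * Real.tan (ψ / 2) ^ (n - 1) * (1 / Real.cos (ψ / 2) ^ 2 * (1 / 2))) ψ :=
    (hcot.pow n).add (htan.pow n)
  rw [hG.deriv]
  obtain ⟨m, rfl⟩ : ∃ m, n = m + 1 := ⟨n - 1, (Nat.succ_pred_eq_of_pos hn).symm⟩
  have hψ : Real.sin ψ = 2 * Real.sin (ψ / 2) * Real.cos (ψ / 2) := by
    have : ψ = 2 * (ψ / 2) := by ring
    rw [this, Real.sin_two_mul]; ring_nf
  rw [hψ]
  simp only [Real.cot_eq_cos_div_sin, Real.tan_eq_sin_div_cos, Nat.add_sub_cancel]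
  simp only [div_pow]
  field_simp [hs.ne', hco.ne']
  ring

/-- For an integer `n ≥ 1` and `0 < ε < π/2`, the function
`G(ψ) = cot(ψ/2)^n + tan(ψ/2)^n` satisfies the Steklov boundary conditions
`-G'(ε) = σₙ⁻(ε) · G(ε)` and `G'(π - ε) = σₙ⁻(ε) · G(π - ε)`, where
`σₙ⁻(ε) = n(1 - tan(ε/2)^(2n)) / (sinε · (1 + tan(ε/2)^(2n)))`. -/
theorem eigenfunction_sigma_minus (n : ℕ) (hn : 1 ≤ n) (ε : ℝ) (hε : 0 < ε)
    (hε' : ε < π / 2) :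
    -deriv (fun ψ : ℝ => Real.cot (ψ / 2) ^ n + Real.tan (ψ / 2) ^ n) ε =
      (n : ℝ) * (1 - Real.tan (ε / 2) ^ (2 * n)) /
          (Real.sin ε * (1 + Real.tan (ε / 2) ^ (2 * n))) *
        (Real.cot (ε / 2) ^ n + Real.tan (ε / 2) ^ n) ∧
    deriv (fun ψ : ℝ => Real.cot (ψ / 2) ^ n + Real.tan (ψ / 2) ^ n) (π - ε) =
      (n : ℝ) * (1 - Real.tan (ε / 2) ^ (2 * n)) /
          (Real.sin ε * (1 + Real.tan (ε / 2) ^ (2 * n))) *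
        (Real.cot ((π - ε) / 2) ^ n + Real.tan ((π - ε) / 2) ^ n) := by
  have hπ := Real.pi_pos
  have hs : 0 < Real.sin (ε / 2) := Real.sin_pos_of_pos_of_lt_pi (by linarith) (by linarith)
  have hco : 0 < Real.cos (ε / 2) := Real.cos_pos_of_mem_Ioo ⟨by linarith, by linarith⟩
  have hεπ : ε < π := by linarith
  have hsinε : Real.sin ε = 2 * Real.sin (ε / 2) * Real.cos (ε / 2) := by
    have : ε = 2 * (ε / 2) := by ring
    rw [this, Real.sin_two_mul]; ring_nf
  have hpow : (0:ℝ) < Real.cos (ε / 2) ^ (2 * n) + Real.sin (ε / 2) ^ (2 * n) := by positivity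
  have hpow' : (0:ℝ) < Real.sin (ε / 2) ^ (2 * n) + Real.cos (ε / 2) ^ (2 * n) := by positivity
  have hangle : (π - ε) / 2 = π / 2 - ε / 2 := by ring
  constructor
  · rw [derivG n hn ε hε hεπ]
    simp only [Real.cot_eq_cos_div_sin, Real.tan_eq_sin_div_cos]
    rw [hsinε]
    simp only [div_pow]
    field_simp [hpow.ne', hpow'.ne', hs.ne', hco.ne']
    ring
  · rw [derivG n hn (π - ε) (by linarith) (by linarith)]
    simp only [Real.cot_eq_cos_div_sin, Real.tan_eq_sin_div_cos]
    rw [hangle, Real.sin_pi_div_two_sub, Real.cos_pi_div_two_sub, Real.sin_pi_sub, hsinε]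
    simp only [div_pow]
    field_simp [hpow.ne', hpow'.ne', hs.ne', hco.ne']
    ring
end

section
/- Let n ≥ 1 be an integer and 0 < ε < π/2. The function G(ψ) = cot(ψ/2)ⁿ − tan(ψ/2)ⁿ satisfies −G'(ε) = σₙ⁺(ε)·G(ε) and G'(π − ε) = σₙ⁺(ε)·G(π − ε), where σₙ⁺(ε) = n·(1 + tan(ε/2)^{2n})/(sin(ε)·(1 − tan(ε/2)^{2n})) and G' denotes the derivative of G. -/
open Real Set

lemma cot_eq_inv_tan' (x : ℝ) : Real.cot x = (Real.tan x)⁻¹ := by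
  rw [Real.cot_eq_cos_div_sin, Real.tan_eq_sin_div_cos, inv_div]

lemma deriv_G (n : ℕ) (hn : 1 ≤ n) (ψ : ℝ) (h1 : 0 < ψ) (h2 : ψ < π) :
    deriv (fun ψ : ℝ => Real.cot (ψ / 2) ^ n - Real.tan (ψ / 2) ^ n) ψ =
      -((n : ℝ) * ((Real.tan (ψ / 2))⁻¹ ^ n + Real.tan (ψ / 2) ^ n) / Real.sin ψ) := by
  have hpi := Real.pi_pos
  have hcpos : 0 < Real.cos (ψ / 2) := Real.cos_pos_of_mem_Ioo ⟨by linarith, by linarith⟩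
  have hc : Real.cos (ψ / 2) ≠ 0 := ne_of_gt hcpos
  have hspos : 0 < Real.sin (ψ / 2) := Real.sin_pos_of_pos_of_lt_pi (by linarith) (by linarith)
  have htpos : 0 < Real.tan (ψ / 2) := by
    rw [Real.tan_eq_sin_div_cos]; positivity
  have ht : Real.tan (ψ / 2) ≠ 0 := ne_of_gt htpos
  have htan : HasDerivAt (fun x : ℝ => Real.tan (x / 2))
      (1 / Real.cos (ψ / 2) ^ 2 * (1 / 2)) ψ :=
    by have := (Real.hasDerivAt_tan hc).comp ψ ((hasDerivAt_id ψ).div_const 2); exact this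
  have hpow := htan.pow n
  have hinv := hpow.inv (pow_ne_zero n ht)
  have hG := hinv.sub hpow
  have heq : (fun ψ : ℝ => Real.cot (ψ / 2) ^ n - Real.tan (ψ / 2) ^ n) =
      (fun ψ : ℝ => (Real.tan (ψ / 2) ^ n)⁻¹ - Real.tan (ψ / 2) ^ n) := by
    funext x; rw [cot_eq_inv_tan', inv_pow]
  rw [heq, (show HasDerivAt (fun ψ : ℝ => (Real.tan (ψ / 2) ^ n)⁻¹ - Real.tan (ψ / 2) ^ n) _ ψ from hG).deriv]
  have hsin : Real.sin ψ = 2 * Real.tan (ψ / 2) * Real.cos (ψ / 2) ^ 2 := by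
    have : ψ = 2 * (ψ / 2) := by ring
    rw [this, Real.sin_two_mul, Real.tan_eq_sin_div_cos]
    field_simp
  obtain ⟨m, rfl⟩ : ∃ m, n = m + 1 := ⟨n - 1, (Nat.succ_pred_eq_of_pos hn).symm⟩
  rw [hsin]
  simp only [Nat.add_sub_cancel, Pi.pow_apply, inv_pow]
  field_simp
  ring

/-- For an integer `n ≥ 1` and `0 < ε < π/2`, the function
`G(ψ) = cot(ψ/2)^n - tan(ψ/2)^n` satisfies the Steklov boundary conditions
`-G'(ε) = σₙ⁺(ε) · G(ε)` and `G'(π - ε) = σₙ⁺(ε) · G(π - ε)`, where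
`σₙ⁺(ε) = n(1 + tan(ε/2)^(2n)) / (sinε · (1 - tan(ε/2)^(2n)))`. -/
theorem eigenfunction_sigma_plus (n : ℕ) (hn : 1 ≤ n) (ε : ℝ) (hε : 0 < ε)
    (hε' : ε < π / 2) :
    -deriv (fun ψ : ℝ => Real.cot (ψ / 2) ^ n - Real.tan (ψ / 2) ^ n) ε =
      (n : ℝ) * (1 + Real.tan (ε / 2) ^ (2 * n)) /
          (Real.sin ε * (1 - Real.tan (ε / 2) ^ (2 * n))) *
        (Real.cot (ε / 2) ^ n - Real.tan (ε / 2) ^ n) ∧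
    deriv (fun ψ : ℝ => Real.cot (ψ / 2) ^ n - Real.tan (ψ / 2) ^ n) (π - ε) =
      (n : ℝ) * (1 + Real.tan (ε / 2) ^ (2 * n)) /
          (Real.sin ε * (1 - Real.tan (ε / 2) ^ (2 * n))) *
        (Real.cot ((π - ε) / 2) ^ n - Real.tan ((π - ε) / 2) ^ n) := by
  have hpi := Real.pi_pos
  have htpos : 0 < Real.tan (ε / 2) :=
    Real.tan_pos_of_pos_of_lt_pi_div_two (by linarith) (by linarith)
  have ht1 : Real.tan (ε / 2) < 1 := by
    have := Real.tan_lt_tan_of_lt_of_lt_pi_div_two (x := ε / 2) (y := π / 4)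
      (by linarith) (by linarith) (by linarith)
    simpa [Real.tan_pi_div_four] using this
  have ht : Real.tan (ε / 2) ≠ 0 := ne_of_gt htpos
  have hpow1 : Real.tan (ε / 2) ^ (2 * n) < 1 := by
    apply pow_lt_one₀ (le_of_lt htpos) ht1
    positivity
  have hone : 1 - Real.tan (ε / 2) ^ (2 * n) ≠ 0 := by linarith
  have hsinpos : 0 < Real.sin ε := Real.sin_pos_of_pos_of_lt_pi hε (by linarith)
  have hsin : Real.sin ε ≠ 0 := ne_of_gt hsinpos
  have htan2 : Real.tan ((π - ε) / 2) = (Real.tan (ε / 2))⁻¹ := by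
    rw [show (π - ε) / 2 = π / 2 - ε / 2 by ring, Real.tan_pi_div_two_sub]
  constructor
  · rw [deriv_G n hn ε hε (by linarith), cot_eq_inv_tan', inv_pow]
    field_simp
    ring
  · rw [deriv_G n hn (π - ε) (by linarith) (by linarith), cot_eq_inv_tan', htan2,
      show Real.sin (π - ε) = Real.sin ε from Real.sin_pi_sub ε, inv_inv, inv_pow]
    field_simp
    ring
end
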